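/- Let γ : [0,L] → ℝⁿ (n ≥ 2) be a unit-speed C^{1,1} curve with γ' 1-Lipschitz (curvature at most 1). If ‖γ(0)‖ = ‖γ(L)‖ = 1 and ‖γ(a)‖ > 1 for some a ∈ [0,L], then L > π. -/

import Mathlib

open Set Filter MeasureTheory
open scoped RealInnerProductSpace Topology ENNReal

noncomputable section

/-- Euclidean space `ℝⁿ`. -/
abbrev Euc (n : ℕ) := EuclideanSpace ℝ (Fin n)

/-- Generalized curvature `κγ(s)` of a curve with derivative `γd` and parameter domain `D`:
the limsup, as `x, y → s` with `x ≠ y`, of `∠(γd x, γd y) / |x - y|`, expressed as the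
infimum of all eventual bounds. -/
def curvAt {n : ℕ} (γd : ℝ → Euc n) (D : Set ℝ) (s : ℝ) : ℝ :=
  sInf {Λ : ℝ | 0 ≤ Λ ∧ ∃ δ > 0, ∀ x ∈ D, ∀ y ∈ D, x ≠ y →
    |x - s| < δ → |y - s| < δ →
    InnerProductGeometry.angle (γd x) (γd y) ≤ Λ * |x - y|}

/-- `κγ(s) < Λ`: there are `δ > 0` and `Λ' < Λ` bounding the angle dilation near `s`. -/
def CurvLt {n : ℕ} (γd : ℝ → Euc n) (D : Set ℝ) (s Λ : ℝ) : Prop :=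
  ∃ δ > 0, ∃ Λ' < Λ, ∀ x ∈ D, ∀ y ∈ D, x ≠ y → |x - s| < δ → |y - s| < δ →
    InnerProductGeometry.angle (γd x) (γd y) ≤ Λ' * |x - y|

/-- `f` restricted to `[a, c]` is a planar circular arc of radius `1/Λ`
of length in `[0, 2π/Λ)`. -/
def IsArc {n : ℕ} (Λ : ℝ) (f : ℝ → Euc n) (a c : ℝ) : Prop :=
  c - a < 2 * Real.pi / Λ ∧
  ∃ (o u e : Euc n) (s₁ : ℝ), ‖u‖ = 1 ∧ ‖e‖ = 1 ∧ ⟪u, e⟫ = 0 ∧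
    ∀ s ∈ Icc a c,
      f s = o + (Λ⁻¹ * Real.cos (Λ * (s - s₁))) • u + (Λ⁻¹ * Real.sin (Λ * (s - s₁))) • e

/-- `f` restricted to `[a, c]` is a planar circular arc of radius `r`. -/
def IsArcR {n : ℕ} (r : ℝ) (f : ℝ → Euc n) (a c : ℝ) : Prop :=
  ∃ (o u e : Euc n) (s₁ : ℝ), ‖u‖ = 1 ∧ ‖e‖ = 1 ∧ ⟪u, e⟫ = 0 ∧
    ∀ s ∈ Icc a c,
      f s = o + (r * Real.cos ((s - s₁) / r)) • u + (r * Real.sin ((s - s₁) / r)) • e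

/-- `O_p(v, r)`: the union of the open balls of radius `r` tangent to `v^⊥` at `p`. -/
def Odisk {n : ℕ} (p v : Euc n) (r : ℝ) : Set (Euc n) :=
  {x | ∃ w : Euc n, ‖w‖ = 1 ∧ ⟪w, v⟫ = 0 ∧ ‖x - p - r • w‖ < r}

/-- Ball radius `R_O` of the curve `f` (with derivative/tangent field `γd`) on domain `D`. -/
def RO {n : ℕ} (f γd : ℝ → Euc n) (D : Set ℝ) : ℝ :=
  sInf {r : ℝ | 0 < r ∧ ∃ s ∈ D, ∃ t ∈ D, ∃ w : Euc n,
    ‖w‖ = 1 ∧ ⟪w, γd s⟫ = 0 ∧ ‖f t - f s - r • w‖ < r}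

/-- Minimal double critical distance of the curve `f` with tangent field `γd`. -/
def MDC {n : ℕ} (f γd : ℝ → Euc n) : ℝ :=
  sInf {d : ℝ | ∃ x y : ℝ, f x ≠ f y ∧ ⟪f x - f y, γd x⟫ = 0 ∧
    ⟪f x - f y, γd y⟫ = 0 ∧ d = ‖f x - f y‖}

/-- Normal injectivity radius `i(K, ℝⁿ)` of the curve `f` with tangent field `γd`. -/
def injRad {n : ℕ} (f γd : ℝ → Euc n) : ℝ :=
  sSup ({0} ∪ {r : ℝ | 0 < r ∧ ∀ s t : ℝ, ∀ u w : Euc n,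
    ⟪u, γd s⟫ = 0 → ⟪w, γd t⟫ = 0 → ‖u‖ < r → ‖w‖ < r →
    f s + u = f t + w → f s = f t ∧ u = w})

/-- A knot: a simple closed unit-speed `C^{1,1}` curve, as an `L`-periodic map `ℝ → ℝⁿ`,
injective on `[0, L)`, with `‖γ'‖ ≡ 1` and `γ'` Lipschitz. -/
structure Knot (n : ℕ) where
  L : ℝ
  Lpos : 0 < L
  f : ℝ → Euc n
  fd : ℝ → Euc n
  per : ∀ s, f (s + L) = f s
  perd : ∀ s, fd (s + L) = fd s
  deriv : ∀ s, HasDerivAt f (fd s) s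
  unit : ∀ s, ‖fd s‖ = 1
  lipd : ∃ C : NNReal, LipschitzWith C fd
  inj : InjOn f (Ico 0 L)

/-- Ropelength `ℓ_e(γ) = L / R_O(K)`. -/
def Knot.ropelength {n : ℕ} (k : Knot n) : ℝ := k.L / RO k.f k.fd univ

/-- The set `I_c` of parameters realizing the minimal double critical distance. -/
def Knot.Ic {n : ℕ} (k : Knot n) : Set ℝ :=
  {x | ∃ y : ℝ, k.f x ≠ k.f y ∧ ⟪k.f x - k.f y, k.fd x⟫ = 0 ∧
    ⟪k.f x - k.f y, k.fd y⟫ = 0 ∧ ‖k.f x - k.f y‖ = MDC k.f k.fd}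

/-- `sup_s κγ(s)` for a knot. -/
def Knot.supCurv {n : ℕ} (k : Knot n) : ℝ := ⨆ s : ℝ, curvAt k.fd univ s

/-- Analytic focal distance `F_k(γ) = (sup_s κγ(s))⁻¹`. -/
def Knot.Fk {n : ℕ} (k : Knot n) : ℝ := (k.supCurv)⁻¹

/-- Two knots are in the same knot class: after rescaling their domains to `ℝ/ℤ`
(realized by `1`-periodic maps `ℝ → ℝⁿ`), they are joined by a continuous homotopy
through injective loops. -/
def SameKnotClass {n : ℕ} (k₁ k₂ : Knot n) : Prop :=
  ∃ H : ℝ → ℝ → Euc n,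
    ContinuousOn (fun z : ℝ × ℝ => H z.1 z.2) (Icc 0 1 ×ˢ univ) ∧
    (∀ t s, H t (s + 1) = H t s) ∧
    (∀ s, H 0 s = k₁.f (k₁.L * s)) ∧
    (∀ s, H 1 s = k₂.f (k₂.L * s)) ∧
    ∀ t ∈ Icc (0 : ℝ) 1, InjOn (H t) (Ico 0 1)

/-- A knot is relatively extremal: a relative minimum of ropelength within its knot class
with respect to the `C¹` topology (on rescaled parametrizations). -/
def RelativelyExtremal {n : ℕ} (k : Knot n) : Prop :=
  ∃ ε > 0, ∀ η : Knot n, SameKnotClass k η →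
    (∀ s : ℝ, ‖η.f (η.L * s) - k.f (k.L * s)‖ +
      ‖η.L • η.fd (η.L * s) - k.L • k.fd (k.L * s)‖ < ε) →
    k.ropelength ≤ η.ropelength

/-- The class `C(p, q; v, w; Λ)`: unit-speed `C^{1,1}` curves `γ : [0, L] → ℝⁿ`
(`L` not fixed) from `p` to `q` with initial/terminal directions `v, w`
and `Λ`-Lipschitz derivative (curvature at most `Λ`). -/
structure CurveCC (n : ℕ) (p q v w : Euc n) (Λ : ℝ) where
  L : ℝ
  Lnn : 0 ≤ L
  f : ℝ → Euc n
  fd : ℝ → Euc n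
  deriv : ∀ s ∈ Icc (0 : ℝ) L, HasDerivWithinAt f (fd s) (Icc 0 L) s
  unit : ∀ s ∈ Icc (0 : ℝ) L, ‖fd s‖ = 1
  lip : LipschitzOnWith Λ.toNNReal fd (Icc 0 L)
  i0 : f 0 = p
  id0 : fd 0 = v
  iL : f L = q
  idL : fd L = w

/-- A `C¹` closed curve of period `L` with nowhere-vanishing derivative. -/
structure ClosedC1 (n : ℕ) (L : ℝ) where
  f : ℝ → Euc n
  fd : ℝ → Euc n
  per : ∀ s, f (s + L) = f s
  perd : ∀ s, fd (s + L) = fd s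
  deriv : ∀ s, HasDerivAt f (fd s) s
  nz : ∀ s, fd s ≠ 0

/-- A simple closed `C^{1,1}` curve of period `L` with nowhere-vanishing derivative. -/
structure ClosedC11 (n : ℕ) (L : ℝ) extends ClosedC1 n L where
  lipd : ∃ C : NNReal, LipschitzWith C fd
  inj : InjOn f (Ico 0 L)

/-- The unit tangent field of `c` is `C`-Lipschitz with respect to the arclength of `c`. -/
def TangentLip {n : ℕ} {L : ℝ} (c : ClosedC1 n L) (C : ℝ) : Prop :=
  ∀ x y : ℝ, x ≤ y →
    ‖‖c.fd y‖⁻¹ • c.fd y - ‖c.fd x‖⁻¹ • c.fd x‖ ≤ C * ∫ t in x..y, ‖c.fd t‖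

/-- Pointwise geometric focal distance `F_g(γ(s))` of the curve `f` with domain `D`. -/
def FgPt {n : ℕ} (f fd : ℝ → Euc n) (D : Set ℝ) (s : ℝ) : ℝ :=
  sInf {r : ℝ | 0 < r ∧ f s ∈ closure (Odisk (f s) (fd s) r ∩ (f '' D))}

end

section AuxStatement10

lemma my_arccos_le_arccos {x y : ℝ} (h : x ≤ y) : Real.arccos y ≤ Real.arccos x := by
  simp only [Real.arccos]
  linarith [Real.monotone_arcsin h]

/-- Triangle inequality for angles between unit vectors, in arccos form. -/
lemma my_angle_triangle {n : ℕ} (u v w : Euc n) (hu : ‖u‖ = 1) (hv : ‖v‖ = 1) (hw : ‖w‖ = 1) :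
    Real.arccos ⟪u, w⟫ ≤ Real.arccos ⟪u, v⟫ + Real.arccos ⟪v, w⟫ := by
  set a : ℝ := ⟪u, v⟫ with ha
  set b : ℝ := ⟪v, w⟫ with hb
  have ha1' : -1 ≤ a ∧ a ≤ 1 := abs_le.1 (by
    simpa [hu, hv] using abs_real_inner_le_norm u v)
  have hb1' : -1 ≤ b ∧ b ≤ 1 := abs_le.1 (by
    simpa [hv, hw] using abs_real_inner_le_norm v w)
  have hvu : ⟪v, u⟫ = a := (real_inner_comm v u).symm
  have hwv : ⟪w, v⟫ = b := (real_inner_comm w v).symm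
  have h1 : ⟪u - a • v, w - b • v⟫ = ⟪u, w⟫ - a * b := by
    simp only [inner_sub_left, inner_sub_right, real_inner_smul_left, real_inner_smul_right,
      real_inner_self_eq_norm_mul_norm, hv, hvu, ← hb]
    ring
  have h2 : ‖u - a • v‖ ^ 2 = 1 - a ^ 2 := by
    rw [norm_sub_sq_real, real_inner_smul_right, norm_smul, hu, hv, ← ha]
    simp only [Real.norm_eq_abs, mul_one]
    rw [sq_abs]; ring
  have h3 : ‖w - b • v‖ ^ 2 = 1 - b ^ 2 := by
    rw [norm_sub_sq_real, real_inner_smul_right, norm_smul, hw, hv, hwv]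
    simp only [Real.norm_eq_abs, mul_one]
    rw [sq_abs]; ring
  have hkey : Real.cos (Real.arccos a + Real.arccos b) ≤ ⟪u, w⟫ := by
    have hCS : |⟪u - a • v, w - b • v⟫| ≤ ‖u - a • v‖ * ‖w - b • v‖ :=
      abs_real_inner_le_norm _ _
    have hna : ‖u - a • v‖ = Real.sqrt (1 - a ^ 2) := by
      rw [← h2]; exact (Real.sqrt_sq (norm_nonneg _)).symm
    have hnb : ‖w - b • v‖ = Real.sqrt (1 - b ^ 2) := by
      rw [← h3]; exact (Real.sqrt_sq (norm_nonneg _)).symm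
    rw [Real.cos_add, Real.cos_arccos ha1'.1 ha1'.2, Real.cos_arccos hb1'.1 hb1'.2,
      Real.sin_arccos, Real.sin_arccos]
    have := abs_le.1 hCS |>.1
    rw [h1, hna, hnb] at *
    linarith [abs_le.1 hCS |>.1, h1 ▸ (abs_le.1 hCS).1]
  by_cases hs : Real.arccos a + Real.arccos b ≤ Real.pi
  · have huw1 : -1 ≤ ⟪u, w⟫ ∧ ⟪u, w⟫ ≤ 1 := abs_le.1 (by
      simpa [hu, hw] using abs_real_inner_le_norm u w)
    calc Real.arccos ⟪u, w⟫ ≤ Real.arccos (Real.cos (Real.arccos a + Real.arccos b)) :=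
          my_arccos_le_arccos hkey
      _ = Real.arccos a + Real.arccos b := Real.arccos_cos
          (add_nonneg (Real.arccos_nonneg _) (Real.arccos_nonneg _)) hs
  · push_neg at hs
    exact le_trans (Real.arccos_le_pi _) hs.le

/-- arccos of inner of unit vectors in terms of chord length. -/
lemma my_arccos_inner_le {n : ℕ} (v w : Euc n) (hv : ‖v‖ = 1) (hw : ‖w‖ = 1)
    {δ : ℝ} (hd : ‖v - w‖ ≤ δ) : Real.arccos ⟪v, w⟫ ≤ 2 * Real.arcsin (δ / 2) := by
  have hsub : ‖v - w‖ ^ 2 = 2 - 2 * ⟪v, w⟫ := by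
    rw [norm_sub_sq_real, hv, hw]; ring
  have hy0 : 0 ≤ ‖v - w‖ / 2 := by positivity
  have hy1 : ‖v - w‖ / 2 ≤ 1 := by
    have : ‖v - w‖ ≤ 2 := by
      calc ‖v - w‖ ≤ ‖v‖ + ‖w‖ := norm_sub_le v w
        _ = 2 := by rw [hv, hw]; norm_num
    linarith
  have hcos : Real.cos (2 * Real.arcsin (‖v - w‖ / 2)) = ⟪v, w⟫ := by
    rw [Real.cos_two_mul', Real.sin_arcsin (by linarith) hy1, Real.cos_arcsin]
    rw [Real.sq_sqrt (by nlinarith)]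
    nlinarith [hsub]
  have heq : Real.arccos ⟪v, w⟫ = 2 * Real.arcsin (‖v - w‖ / 2) := by
    rw [← hcos, Real.arccos_cos]
    · have := Real.arcsin_nonneg.2 hy0
      linarith
    · have := Real.arcsin_le_pi_div_two (‖v - w‖ / 2)
      linarith
  rw [heq]
  have := Real.monotone_arcsin (by linarith : ‖v - w‖ / 2 ≤ δ / 2)
  linarith

/-- A 1-Lipschitz unit vector field turns at unit speed at most. -/
lemma my_cos_le_inner {n : ℕ} (g : ℝ → Euc n) (T : ℝ)
    (hlip : LipschitzOnWith 1 g (Icc 0 T)) (hunit : ∀ s ∈ Icc (0:ℝ) T, ‖g s‖ = 1)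
    (t : ℝ) (ht : t ∈ Icc (0:ℝ) T) (htpi : t ≤ Real.pi) :
    Real.cos t ≤ ⟪g 0, g t⟫ := by
  have h0T : (0:ℝ) ∈ Icc (0:ℝ) T := ⟨le_refl _, ht.1.trans ht.2⟩
  rcases eq_or_lt_of_le ht.1 with h0 | h0
  · rw [← h0]
    have : ⟪g 0, g 0⟫ = 1 := by
      rw [real_inner_self_eq_norm_mul_norm, hunit 0 h0T]; norm_num
    rw [this]
    exact Real.cos_le_one 0
  -- t > 0
  have hdist := lipschitzOnWith_iff_dist_le_mul.1 hlip
  have key : ∀ N : ℕ, 0 < N → ∀ i : ℕ, i ≤ N →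
      Real.arccos ⟪g 0, g (i * (t / N))⟫ ≤ i * (2 * Real.arcsin (t / (2 * N))) := by
    intro N hN
    have hNR : (0:ℝ) < N := by exact_mod_cast hN
    have hmem : ∀ j : ℕ, j ≤ N → (j : ℝ) * (t / N) ∈ Icc (0:ℝ) T := by
      intro j hj
      constructor
      · positivity
      · have hjN : (j:ℝ) ≤ N := by exact_mod_cast hj
        have : (j:ℝ) * (t / N) ≤ (N:ℝ) * (t / N) := by
          apply mul_le_mul_of_nonneg_right hjN; positivity
        rw [mul_div_cancel₀] at this
        · exact this.trans ht.2
        · exact ne_of_gt hNR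
    intro i
    induction i with
    | zero =>
      intro _
      simp only [Nat.cast_zero, zero_mul]
      have : ⟪g 0, g 0⟫ = 1 := by
        rw [real_inner_self_eq_norm_mul_norm, hunit 0 h0T]; norm_num
      rw [this, Real.arccos_one]
    | succ i ih =>
      intro hi
      have hii : i ≤ N := Nat.le_of_succ_le hi
      have hm1 := hmem i hii
      have hm2 := hmem (i+1) hi
      have hstep : ‖g ((i:ℝ) * (t / N)) - g (((i:ℕ)+1 : ℕ) * (t / N))‖ ≤ t / N := by
        rw [← dist_eq_norm]
        calc dist (g ((i:ℝ) * (t / N))) (g (((i:ℕ)+1 : ℕ) * (t / N)))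
            ≤ 1 * dist ((i:ℝ) * (t / N)) (((i:ℕ)+1 : ℕ) * (t / N)) := hdist _ hm1 _ hm2
          _ = t / N := by
              rw [one_mul, Real.dist_eq]
              push_cast
              rw [abs_of_nonpos (by nlinarith [div_nonneg h0.le hNR.le])]
              ring
      have htri := my_angle_triangle (g 0) (g ((i:ℝ) * (t / N))) (g (((i:ℕ)+1:ℕ) * (t / N)))
        (hunit 0 h0T) (hunit _ hm1) (hunit _ hm2)
      have hchord := my_arccos_inner_le (g ((i:ℝ) * (t / N))) (g (((i:ℕ)+1:ℕ) * (t / N)))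
        (hunit _ hm1) (hunit _ hm2) hstep
      have harc : Real.arccos ⟪g ((i:ℝ) * (t / N)), g (((i:ℕ)+1:ℕ) * (t / N))⟫
          ≤ 2 * Real.arcsin (t / (2 * N)) := by
        have : t / N / 2 = t / (2 * N) := by ring
        rwa [this] at hchord
      have := (htri.trans (add_le_add (ih hii) harc))
      calc Real.arccos ⟪g 0, g (((i:ℕ)+1:ℕ) * (t / N))⟫
          ≤ i * (2 * Real.arcsin (t / (2 * N))) + 2 * Real.arcsin (t / (2 * N)) := this
        _ = ((i:ℕ)+1:ℕ) * (2 * Real.arcsin (t / (2 * N))) := by push_cast; ring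
  -- limit
  have hA : ∀ N : ℕ, 0 < N →
      Real.arccos ⟪g 0, g t⟫ ≤ N * (2 * Real.arcsin (t / (2 * N))) := by
    intro N hN
    have h := key N hN N le_rfl
    have hNR : (0:ℝ) < N := by exact_mod_cast hN
    rwa [mul_div_cancel₀ t (ne_of_gt hNR)] at h
  set A := Real.arccos ⟪g 0, g t⟫ with hAdef
  have hAt : A ≤ t := by
    have hu0 : Tendsto (fun N : ℕ => t / (2 * N)) atTop (𝓝[≠] (0:ℝ)) := by
      rw [tendsto_nhdsWithin_iff]
      constructor
      · have : (fun N : ℕ => t / (2 * N)) = fun N : ℕ => (t / 2) / N := by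
          funext N; rw [div_div]
        rw [this]
        exact tendsto_const_div_atTop_nhds_zero_nat (t / 2)
      · filter_upwards [eventually_ge_atTop 1] with N hN
        have hNR : (0:ℝ) < N := by exact_mod_cast hN
        have : 0 < t / (2 * N) := by positivity
        simpa using ne_of_gt this
    have hslope : Tendsto (slope Real.arcsin 0) (𝓝[≠] (0:ℝ)) (𝓝 1) := by
      have hd : HasDerivAt Real.arcsin 1 0 := by
        have := Real.hasDerivAt_arcsin (by norm_num : (0:ℝ) ≠ -1) (by norm_num : (0:ℝ) ≠ 1)
        simpa using this
      exact hasDerivAt_iff_tendsto_slope.1 hd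
    have hcomp : Tendsto (fun N : ℕ => t * slope Real.arcsin 0 (t / (2 * N))) atTop
        (𝓝 (t * 1)) := (hslope.comp hu0).const_mul t
    rw [mul_one] at hcomp
    refine ge_of_tendsto hcomp ?_
    filter_upwards [eventually_ge_atTop 1] with N hN
    have hNpos : 0 < N := hN
    have hNR : (0:ℝ) < N := by exact_mod_cast hN
    have heq : t * slope Real.arcsin 0 (t / (2 * N))
        = N * (2 * Real.arcsin (t / (2 * N))) := by
      rw [slope_def_field]
      rw [Real.arcsin_zero]
      have ht0 : t ≠ 0 := h0.ne'
      generalize Real.arcsin (t / (2 * N)) = X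
      field_simp
      ring_nf
      rw [mul_comm t X, mul_assoc, mul_inv_cancel₀ ht0, mul_one]
    rw [heq]
    exact hA N hNpos
  have hbd : -1 ≤ ⟪g 0, g t⟫ ∧ ⟪g 0, g t⟫ ≤ 1 := abs_le.1 (by
    simpa [hunit 0 h0T, hunit t ht] using abs_real_inner_le_norm (g 0) (g t))
  calc Real.cos t ≤ Real.cos A :=
        Real.cos_le_cos_of_nonneg_of_le_pi (Real.arccos_nonneg _) htpi hAt
    _ = ⟪g 0, g t⟫ := Real.cos_arccos hbd.1 hbd.2

/-- Bessel for two orthonormal vectors. -/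
lemma my_bessel {n : ℕ} (u e : Euc n) (hu : ‖u‖ = 1) (he : ‖e‖ = 1) (hue : ⟪u, e⟫ = 0)
    (x : Euc n) : ⟪x, u⟫ ^ 2 + ⟪x, e⟫ ^ 2 ≤ ‖x‖ ^ 2 := by
  have hexp : ‖x - (⟪x, u⟫ • u + ⟪x, e⟫ • e)‖ ^ 2
      = ‖x‖ ^ 2 - ⟪x, u⟫ ^ 2 - ⟪x, e⟫ ^ 2 := by
    rw [norm_sub_sq_real, norm_add_sq_real]
    simp only [inner_add_right, real_inner_smul_right, norm_smul, Real.norm_eq_abs,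
      real_inner_smul_left, hu, he, hue, mul_one]
    simp only [sq_abs]
    ring
  nlinarith [sq_nonneg ‖x - (⟪x, u⟫ • u + ⟪x, e⟫ • e)‖]

/-- Key one-sided lemma: curve with curvature ≤ 1 starting orthogonally to the radial
direction outside the unit sphere stays outside for a quarter period. -/
lemma my_side {n : ℕ} (T : ℝ) (hT0 : 0 ≤ T) (hTpi : T ≤ Real.pi / 2)
    (f fd : ℝ → Euc n)
    (hderiv : ∀ s ∈ Icc (0:ℝ) T, HasDerivWithinAt f (fd s) (Icc 0 T) s)
    (hunit : ∀ s ∈ Icc (0:ℝ) T, ‖fd s‖ = 1)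
    (hlip : LipschitzOnWith 1 fd (Icc 0 T))
    (hperp : ⟪f 0, fd 0⟫ = 0) (hm : 1 < ‖f 0‖) :
    1 < ‖f T‖ := by
  have hpi := Real.pi_pos
  have h0T : (0:ℝ) ∈ Icc (0:ℝ) T := ⟨le_refl _, hT0⟩
  have hTT : T ∈ Icc (0:ℝ) T := ⟨hT0, le_refl _⟩
  set m := ‖f 0‖ with hmdef
  have hm0 : 0 < m := lt_trans one_pos hm
  set u : Euc n := m⁻¹ • f 0 with hudef
  set e : Euc n := fd 0 with hedef
  have hu : ‖u‖ = 1 := by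
    rw [hudef, norm_smul, Real.norm_eq_abs, abs_of_pos (inv_pos.2 hm0), ← hmdef,
      inv_mul_cancel₀ (ne_of_gt hm0)]
  have he : ‖e‖ = 1 := hunit 0 h0T
  have hue : ⟪u, e⟫ = 0 := by
    rw [hudef, real_inner_smul_left, hedef, hperp, mul_zero]
  have hfu : ⟪f 0, u⟫ = m := by
    rw [hudef, real_inner_smul_right, real_inner_self_eq_norm_mul_norm, ← hmdef]
    field_simp
  have hfe : ⟪f 0, e⟫ = 0 := hperp
  -- tangent comparison
  have hcos : ∀ t ∈ Icc (0:ℝ) T, Real.cos t ≤ ⟪fd t, e⟫ := by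
    intro t htm
    rw [real_inner_comm]
    exact my_cos_le_inner fd T hlip hunit t htm (htm.2.trans (by linarith))
  -- basic facts
  have hfc : ContinuousOn f (Icc 0 T) := fun s hs => (hderiv s hs).continuousWithinAt
  have hdAt : ∀ s ∈ Ioo (0:ℝ) T, HasDerivAt f (fd s) s := by
    intro s hs
    exact (hderiv s (Ioo_subset_Icc_self hs)).hasDerivAt (Icc_mem_nhds hs.1 hs.2)
  have hcos0 : ∀ s ∈ Icc (0:ℝ) T, 0 ≤ Real.cos s := by
    intro s hs
    exact Real.cos_nonneg_of_mem_Icc ⟨by linarith [hs.1], by linarith [hs.2]⟩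
  have hsin0 : ∀ s ∈ Icc (0:ℝ) T, 0 ≤ Real.sin s := by
    intro s hs
    exact Real.sin_nonneg_of_nonneg_of_le_pi hs.1 (by linarith [hs.2])
  -- |⟪fd s, u⟫| ≤ sin s
  have hfdu : ∀ s ∈ Icc (0:ℝ) T, -Real.sin s ≤ ⟪fd s, u⟫ := by
    intro s hs
    have hb := my_bessel u e hu he hue (fd s)
    rw [hunit s hs] at hb
    have hc := hcos s hs
    have hc0 := hcos0 s hs
    have hs0 := hsin0 s hs
    nlinarith [Real.sin_sq_add_cos_sq s, sq_nonneg (⟪fd s, u⟫ + Real.sin s)]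
  -- G monotone
  have hGmono : MonotoneOn (fun s => ⟪f s, e⟫ - Real.sin s) (Icc 0 T) := by
    apply monotoneOn_of_deriv_nonneg (convex_Icc 0 T)
    · exact (hfc.inner continuousOn_const).sub Real.continuous_sin.continuousOn
    · intro s hs
      rw [interior_Icc] at hs
      exact (((hdAt s hs).inner ℝ (hasDerivAt_const s e)).sub (Real.hasDerivAt_sin s)).differentiableAt.differentiableWithinAt
    · intro s hs
      rw [interior_Icc] at hs
      have hD : HasDerivAt (fun s => ⟪f s, e⟫ - Real.sin s) (⟪fd s, e⟫ - Real.cos s) s := by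
        have := ((hdAt s hs).inner ℝ (hasDerivAt_const s e)).sub (Real.hasDerivAt_sin s)
        exact this.congr_deriv (by simp)
      rw [hD.deriv]
      have := hcos s (Ioo_subset_Icc_self hs)
      linarith
  -- F monotone
  have hFmono : MonotoneOn (fun s => ⟪f s, u⟫ - Real.cos s) (Icc 0 T) := by
    apply monotoneOn_of_deriv_nonneg (convex_Icc 0 T)
    · exact (hfc.inner continuousOn_const).sub Real.continuous_cos.continuousOn
    · intro s hs
      rw [interior_Icc] at hs
      exact (((hdAt s hs).inner ℝ (hasDerivAt_const s u)).sub (Real.hasDerivAt_cos s)).differentiableAt.differentiableWithinAt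
    · intro s hs
      rw [interior_Icc] at hs
      have hD : HasDerivAt (fun s => ⟪f s, u⟫ - Real.cos s) (⟪fd s, u⟫ + Real.sin s) s := by
        have := ((hdAt s hs).inner ℝ (hasDerivAt_const s u)).sub (Real.hasDerivAt_cos s)
        exact this.congr_deriv (by simp)
      rw [hD.deriv]
      have := hfdu s (Ioo_subset_Icc_self hs)
      linarith
  have hG := hGmono h0T hTT hT0
  have hF := hFmono h0T hTT hT0
  simp only [hfe, hfu, Real.sin_zero, Real.cos_zero, sub_zero] at hG hF
  -- hG : 0 ≤ ⟪f T, e⟫ - sin T ; hF : m - 1 ≤ ⟪f T, u⟫ - cos T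
  have hb := my_bessel u e hu he hue (f T)
  have hc0 := hcos0 T hTT
  have hs0 := hsin0 T hTT
  nlinarith [Real.sin_sq_add_cos_sq T, norm_nonneg (f T), sq_nonneg (‖f T‖ - 1),
    sq_nonneg (m - 1), sq_nonneg (‖f T‖ + 1)]

end AuxStatement10

/-- If a unit-speed curve of curvature at most `1` starts and ends on the
unit sphere and exits the closed unit ball, then its length exceeds `π`. -/

theorem statement_10 {n : ℕ} (hn : 2 ≤ n) (L : ℝ) (hL : 0 ≤ L) (f fd : ℝ → Euc n)
    (hderiv : ∀ s ∈ Set.Icc (0 : ℝ) L, HasDerivWithinAt f (fd s) (Set.Icc 0 L) s)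
    (hunit : ∀ s ∈ Set.Icc (0 : ℝ) L, ‖fd s‖ = 1)
    (hlip : LipschitzOnWith 1 fd (Set.Icc 0 L))
    (h0 : ‖f 0‖ = 1) (hLend : ‖f L‖ = 1)
    (a : ℝ) (ha : a ∈ Set.Icc (0 : ℝ) L) (hout : 1 < ‖f a‖) :
    Real.pi < L := by
  have hpi := Real.pi_pos
  have hfc : ContinuousOn f (Icc 0 L) := fun s hs => (hderiv s hs).continuousWithinAt
  obtain ⟨s₀, hs₀mem, hs₀max⟩ :=
    isCompact_Icc.exists_isMaxOn (nonempty_Icc.2 hL) hfc.norm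
  have hmax : ∀ x ∈ Icc (0:ℝ) L, ‖f x‖ ≤ ‖f s₀‖ := fun x hx => hs₀max hx
  have hm : 1 < ‖f s₀‖ := lt_of_lt_of_le hout (hmax a ha)
  have hs₀0 : s₀ ≠ 0 := by
    intro h; rw [h, h0] at hm; exact lt_irrefl 1 hm
  have hs₀L : s₀ ≠ L := by
    intro h; rw [h, hLend] at hm; exact lt_irrefl 1 hm
  have hs₀I : s₀ ∈ Ioo (0:ℝ) L :=
    ⟨lt_of_le_of_ne hs₀mem.1 (Ne.symm hs₀0), lt_of_le_of_ne hs₀mem.2 hs₀L⟩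
  -- Fermat: orthogonality at the max
  have hdAt : HasDerivAt f (fd s₀) s₀ :=
    (hderiv s₀ hs₀mem).hasDerivAt (Icc_mem_nhds hs₀I.1 hs₀I.2)
  have hloc : IsLocalMax (fun s => ⟪f s, f s⟫) s₀ := by
    filter_upwards [Icc_mem_nhds hs₀I.1 hs₀I.2] with x hx
    have h1 := hmax x hx
    simp only [real_inner_self_eq_norm_mul_norm]
    exact mul_le_mul h1 h1 (norm_nonneg _) (norm_nonneg _)
  have hzero := hloc.hasDerivAt_eq_zero (hdAt.inner ℝ hdAt)
  have hperp : ⟪f s₀, fd s₀⟫ = 0 := by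
    have hcomm : ⟪fd s₀, f s₀⟫ = ⟪f s₀, fd s₀⟫ := real_inner_comm _ _
    rw [hcomm] at hzero
    linarith [hzero]
  have hlipd := lipschitzOnWith_iff_dist_le_mul.1 hlip
  -- Right side: π/2 < L - s₀
  have hR : Real.pi / 2 < L - s₀ := by
    by_contra hR
    push_neg at hR
    set T := L - s₀ with hTdef
    have hT0 : 0 ≤ T := by simp [hTdef]; linarith [hs₀mem.2]
    have hmaps : ∀ x ∈ Icc (0:ℝ) T, s₀ + x ∈ Icc (0:ℝ) L := by
      intro x hx
      exact ⟨by linarith [hx.1, hs₀mem.1], by simp [hTdef] at hx; linarith [hx.2]⟩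
    have key := my_side T hT0 hR (fun s => f (s₀ + s)) (fun s => fd (s₀ + s))
      (by
        intro s hs
        have h1 : HasDerivWithinAt f (fd (s₀ + s)) (Icc 0 L) (s₀ + s) :=
          hderiv _ (hmaps s hs)
        have h2 : HasDerivWithinAt (fun x : ℝ => s₀ + x) 1 (Icc 0 T) s :=
          ((hasDerivAt_id s).const_add s₀).hasDerivWithinAt
        have := h1.scomp s h2 hmaps
        exact this.congr_deriv (by simp))
      (fun s hs => hunit _ (hmaps s hs))
      (by
        rw [lipschitzOnWith_iff_dist_le_mul]
        intro x hx y hy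
        calc dist (fd (s₀ + x)) (fd (s₀ + y)) ≤ 1 * dist (s₀ + x) (s₀ + y) :=
              hlipd _ (hmaps x hx) _ (hmaps y hy)
          _ = 1 * dist x y := by rw [dist_add_left])
      (by simpa using hperp)
      (by simpa using hm)
    beta_reduce at key
    rw [show s₀ + T = L by simp [hTdef], hLend] at key
    exact lt_irrefl 1 key
  -- Left side: π/2 < s₀
  have hLft : Real.pi / 2 < s₀ := by
    by_contra hLft
    push_neg at hLft
    have hmaps : ∀ x ∈ Icc (0:ℝ) s₀, s₀ - x ∈ Icc (0:ℝ) L := by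
      intro x hx
      exact ⟨by linarith [hx.2], by linarith [hx.1, hs₀mem.2]⟩
    have key := my_side s₀ hs₀mem.1 hLft (fun s => f (s₀ - s)) (fun s => -fd (s₀ - s))
      (by
        intro s hs
        have h1 : HasDerivWithinAt f (fd (s₀ - s)) (Icc 0 L) (s₀ - s) :=
          hderiv _ (hmaps s hs)
        have h2 : HasDerivWithinAt (fun x : ℝ => s₀ - x) (-1) (Icc 0 s₀) s :=
          ((hasDerivAt_id s).const_sub s₀).hasDerivWithinAt
        have := h1.scomp s h2 hmaps
        exact this.congr_deriv (by simp))
      (fun s hs => by rw [norm_neg]; exact hunit _ (hmaps s hs))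
      (by
        rw [lipschitzOnWith_iff_dist_le_mul]
        intro x hx y hy
        calc dist (-fd (s₀ - x)) (-fd (s₀ - y)) = dist (fd (s₀ - x)) (fd (s₀ - y)) :=
              dist_neg_neg _ _
          _ ≤ 1 * dist (s₀ - x) (s₀ - y) := hlipd _ (hmaps x hx) _ (hmaps y hy)
          _ = 1 * dist x y := by rw [dist_sub_left])
      (by simp [inner_neg_right, hperp])
      (by simpa using hm)
    beta_reduce at key
    rw [show s₀ - s₀ = (0:ℝ) by ring, h0] at key
    exact lt_irrefl 1 key
  linarith
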